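/- arXiv:math/0211446 — 6 statements merged into one kernel-verified Lean document; each statement's English description precedes it below -/
import Mathlib

section
/- Let V₁ and V₂ be finite-dimensional real inner product spaces and let V = V₁ ⊕ V₂ be their orthogonal direct sum. Let g₁ ⊆ so(V₁) and g₂ ⊆ so(V₂) be Lie subalgebras, and regard g₁ ⊕ g₂ as a Lie subalgebra of so(V) acting block-diagonally. Then K(g₁ ⊕ g₂) is the internal direct sum of K(g₁) and K(g₂): every algebraic curvature tensor R on V with values in g₁ ⊕ g₂ decomposes uniquely as R = R₁ + R₂, where Rᵢ is the extension to V of an algebraic curvature tensor on Vᵢ with values in gᵢ, and conversely every such sum is an algebraic curvature tensor with values in g₁ ⊕ g₂. -/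
open scoped RealInnerProductSpace

noncomputable section

attribute [local instance 100] LieRing.ofAssociativeRing

/-- The first Bianchi identity `b₁ R = 0` for an alternating bilinear map
`R : V × V → End V`. -/
def FirstBianchi {V : Type*} [NormedAddCommGroup V] [InnerProductSpace ℝ V]
    (R : V →ₗ[ℝ] V →ₗ[ℝ] Module.End ℝ V) : Prop :=
  ∀ X Y Z : V, R X Y Z + R Y Z X + R Z X Y = 0

/-- `R` is an algebraic curvature tensor with values in the set `g ⊆ End V`:
an alternating bilinear map `V × V → g` satisfying the first Bianchi identity. -/
def IsAlgCurv {V : Type*} [NormedAddCommGroup V] [InnerProductSpace ℝ V]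
    (g : Set (Module.End ℝ V)) (R : V →ₗ[ℝ] V →ₗ[ℝ] Module.End ℝ V) : Prop :=
  (∀ X : V, R X X = 0) ∧ (∀ X Y : V, R X Y ∈ g) ∧ FirstBianchi R

/-- `R` is the extension to `V` of an algebraic curvature tensor on the subspace `V₁`
with values in `g`: it has values in `g` and factors through the orthogonal
projection onto `V₁` in both arguments. -/
def IsExtCurv {V : Type*} [NormedAddCommGroup V] [InnerProductSpace ℝ V]
    [FiniteDimensional ℝ V] (V₁ : Submodule ℝ V) (g : Set (Module.End ℝ V))
    (R : V →ₗ[ℝ] V →ₗ[ℝ] Module.End ℝ V) : Prop :=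
  IsAlgCurv g R ∧
    ∀ X Y : V, R X Y = R ((V₁.orthogonalProjectionOnto X : V)) ((V₁.orthogonalProjectionOnto Y : V))

section Aux

variable {V : Type*} [NormedAddCommGroup V] [InnerProductSpace ℝ V]

/-- A map `f` on `U × U` which is symmetric and whose associated trilinear form
`⟪f x z, w⟫` is antisymmetric in the last two arguments vanishes on `U`. -/
lemma aux_six (U : Submodule ℝ V) (f : V → V → V)
    (hsym : ∀ x ∈ U, ∀ z ∈ U, f x z = f z x)
    (hskew : ∀ x z w : V, ⟪f x z, w⟫ = -⟪z, f x w⟫)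
    (hmem : ∀ x ∈ U, ∀ z ∈ U, f x z ∈ U) :
    ∀ x ∈ U, ∀ z ∈ U, f x z = 0 := by
  intro x hx z hz
  set w := f x z with hw
  have hwU : w ∈ U := hmem x hx z hz
  have key : ⟪f x z, w⟫ = -⟪f x z, w⟫ := by
    calc ⟪f x z, w⟫ = ⟪f z x, w⟫ := by rw [hsym x hx z hz]
      _ = -⟪x, f z w⟫ := hskew z x w
      _ = -⟪x, f w z⟫ := by rw [hsym z hz w hwU]
      _ = -⟪f w z, x⟫ := by rw [real_inner_comm]
      _ = -(-⟪z, f w x⟫) := by rw [hskew w z x]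
      _ = ⟪z, f x w⟫ := by rw [neg_neg, hsym w hwU x hx]
      _ = -⟪f x z, w⟫ := by rw [hskew x z w, neg_neg]
  have h0 : ⟪w, w⟫ = 0 := by rw [← hw] at key; linarith
  exact inner_self_eq_zero.mp h0

lemma antisym_of_alt (R : V →ₗ[ℝ] V →ₗ[ℝ] Module.End ℝ V)
    (halt : ∀ X : V, R X X = 0) : ∀ X Y : V, R X Y = -R Y X := by
  intro X Y
  have h := halt (X + Y)
  simp only [map_add, LinearMap.add_apply, halt X, halt Y, zero_add, add_zero] at h
  exact eq_neg_of_add_eq_zero_right h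

/-- For a curvature tensor preserving the blocks `U`, `W`, `R x y z = 0` when
`x, y ∈ U` and `z ∈ W`. -/
lemma same_block_zero (U W : Submodule ℝ V)
    (horth : ∀ u ∈ U, ∀ w ∈ W, ⟪u, w⟫ = 0)
    (R : V →ₗ[ℝ] V →ₗ[ℝ] Module.End ℝ V)
    (hB : FirstBianchi R)
    (hU : ∀ X Y : V, ∀ z ∈ U, R X Y z ∈ U)
    (hW : ∀ X Y : V, ∀ z ∈ W, R X Y z ∈ W) :
    ∀ x ∈ U, ∀ y ∈ U, ∀ z ∈ W, R x y z = 0 := by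
  intro x hx y hy z hz
  have hb := hB x y z
  rw [add_assoc] at hb
  have h2 : R x y z = -(R y z x + R z x y) := eq_neg_of_add_eq_zero_left hb
  have hmemU : R x y z ∈ U := by
    rw [h2]; exact neg_mem (add_mem (hU _ _ x hx) (hU _ _ y hy))
  have hmemW : R x y z ∈ W := hW _ _ z hz
  exact inner_self_eq_zero.mp (horth _ hmemU _ hmemW)

/-- Mixed arguments from orthogonal invariant blocks kill a curvature tensor. -/
lemma cross_zero (U W : Submodule ℝ V)
    (horth : ∀ u ∈ U, ∀ w ∈ W, ⟪u, w⟫ = 0)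
    (hdec : ∀ v : V, ∃ u ∈ U, ∃ w ∈ W, v = u + w)
    (R : V →ₗ[ℝ] V →ₗ[ℝ] Module.End ℝ V)
    (halt : ∀ X : V, R X X = 0) (hB : FirstBianchi R)
    (hskew : ∀ X Y x y : V, ⟪R X Y x, y⟫ = -⟪x, R X Y y⟫)
    (hU : ∀ X Y : V, ∀ z ∈ U, R X Y z ∈ U)
    (hW : ∀ X Y : V, ∀ z ∈ W, R X Y z ∈ W) :
    ∀ x ∈ U, ∀ y ∈ W, R x y = 0 := by
  have ha := antisym_of_alt R halt
  have horth' : ∀ u ∈ W, ∀ w ∈ U, ⟪u, w⟫ = 0 := by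
    intro u hu w hw; rw [real_inner_comm]; exact horth w hw u hu
  have zUU := same_block_zero U W horth R hB hU hW
  have zWW := same_block_zero W U horth' R hB hW hU
  -- symmetry in the two `U` slots
  have symU : ∀ y ∈ W, ∀ x ∈ U, ∀ z ∈ U, R x y z = R z y x := by
    intro y hy x hx z hz
    have hb := hB x y z
    rw [zUU z hz x hx y hy, add_zero] at hb
    have : R x y z = -(R y z x) := eq_neg_of_add_eq_zero_left hb
    rw [this, ha y z, LinearMap.neg_apply, neg_neg]
  have symW : ∀ x ∈ U, ∀ y ∈ W, ∀ z ∈ W, R y x z = R z x y := by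
    intro x hx y hy z hz
    have hb := hB y x z
    rw [zWW z hz y hy x hx, add_zero] at hb
    have : R y x z = -(R x z y) := eq_neg_of_add_eq_zero_left hb
    rw [this, ha x z, LinearMap.neg_apply, neg_neg]
  intro x hx y hy
  have crossU : ∀ z ∈ U, R x y z = 0 := by
    intro z hz
    exact aux_six U (fun a b => R a y b)
      (fun a ha' b hb' => symU y hy a ha' b hb')
      (fun a b c => hskew a y b c)
      (fun a _ b hb' => hU a y b hb') x hx z hz
  have crossW : ∀ z ∈ W, R x y z = 0 := by
    intro z hz
    have h0 : R y x z = 0 :=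
      aux_six W (fun a b => R a x b)
        (fun a ha' b hb' => symW x hx a ha' b hb')
        (fun a b c => hskew a x b c)
        (fun a _ b hb' => hW a x b hb') y hy z hz
    rw [ha x y, LinearMap.neg_apply, h0, neg_zero]
  ext z
  obtain ⟨u, hu, w, hw, rfl⟩ := hdec z
  show R x y (u + w) = 0
  rw [map_add, crossU u hu, crossW w hw, add_zero]

/-- Main one-sided lemma: the `U`-block of a curvature tensor with values in
`gU ⊕ gW` is an extended curvature tensor with values in `gU`. -/
lemma half (U W : Submodule ℝ V) (gU gW S : Set (Module.End ℝ V))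
    (hgU : ∀ A ∈ gU, (∀ x y : V, ⟪A x, y⟫ = -⟪x, A y⟫) ∧
      (∀ x ∈ U, A x ∈ U) ∧ (∀ x ∈ W, A x = 0))
    (hgW : ∀ A ∈ gW, (∀ x y : V, ⟪A x, y⟫ = -⟪x, A y⟫) ∧
      (∀ x ∈ W, A x ∈ W) ∧ (∀ x ∈ U, A x = 0))
    (hS : ∀ A ∈ S, ∃ B ∈ gU, ∃ C ∈ gW, A = B + C)
    (horth : ∀ u ∈ U, ∀ w ∈ W, ⟪u, w⟫ = 0)
    (P Q : V →ₗ[ℝ] V)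
    (hPmem : ∀ x : V, P x ∈ U) (hQmem : ∀ x : V, Q x ∈ W)
    (hPU : ∀ x ∈ U, P x = x)
    (hPQ : ∀ x : V, P x + Q x = x)
    (R : V →ₗ[ℝ] V →ₗ[ℝ] Module.End ℝ V) (hR : IsAlgCurv S R) :
    IsAlgCurv gU (R.compl₁₂ P P) ∧
      (∀ X Y : V, (R.compl₁₂ P P) X Y = (R.compl₁₂ P P) (P X) (P Y)) ∧
      (∀ x ∈ U, ∀ y ∈ W, R x y = 0) := by
  obtain ⟨halt, hval, hB⟩ := hR
  have hskew : ∀ X Y x y : V, ⟪R X Y x, y⟫ = -⟪x, R X Y y⟫ := by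
    intro X Y x y
    obtain ⟨B, hBm, C, hCm, hBC⟩ := hS _ (hval X Y)
    rw [hBC]
    show ⟪B x + C x, y⟫ = -⟪x, B y + C y⟫
    rw [inner_add_left, inner_add_right, (hgU B hBm).1, (hgW C hCm).1]
    ring
  have hU : ∀ X Y : V, ∀ z ∈ U, R X Y z ∈ U := by
    intro X Y z hz
    obtain ⟨B, hBm, C, hCm, hBC⟩ := hS _ (hval X Y)
    rw [hBC]
    show B z + C z ∈ U
    rw [(hgW C hCm).2.2 z hz, add_zero]
    exact (hgU B hBm).2.1 z hz
  have hW : ∀ X Y : V, ∀ z ∈ W, R X Y z ∈ W := by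
    intro X Y z hz
    obtain ⟨B, hBm, C, hCm, hBC⟩ := hS _ (hval X Y)
    rw [hBC]
    show B z + C z ∈ W
    rw [(hgU B hBm).2.2 z hz, zero_add]
    exact (hgW C hCm).2.1 z hz
  have hdec : ∀ v : V, ∃ u ∈ U, ∃ w ∈ W, v = u + w :=
    fun v => ⟨P v, hPmem v, Q v, hQmem v, (hPQ v).symm⟩
  have cross := cross_zero U W horth hdec R halt hB hskew hU hW
  have horth' : ∀ u ∈ W, ∀ w ∈ U, ⟪u, w⟫ = 0 := by
    intro u hu w hw; rw [real_inner_comm]; exact horth w hw u hu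
  have hdec' : ∀ v : V, ∃ u ∈ W, ∃ w ∈ U, v = u + w :=
    fun v => ⟨Q v, hQmem v, P v, hPmem v, by rw [add_comm]; exact (hPQ v).symm⟩
  have cross' := cross_zero W U horth' hdec' R halt hB hskew hW hU
  have killW : ∀ X Y : V, ∀ z ∈ W, R (P X) (P Y) z = 0 := by
    intro X Y z hz
    have hb := hB (P X) (P Y) z
    rw [cross (P Y) (hPmem Y) z hz, cross' z hz (P X) (hPmem X)] at hb
    simpa using hb
  have valU : ∀ X Y : V, R (P X) (P Y) ∈ gU := by
    intro X Y
    obtain ⟨B, hBm, C, hCm, hBC⟩ := hS _ (hval (P X) (P Y))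
    have hC0 : C = 0 := by
      ext z
      have h1 : C (P z) = 0 := (hgW C hCm).2.2 (P z) (hPmem z)
      have h2 : C (Q z) = 0 := by
        have := killW X Y (Q z) (hQmem z)
        rw [hBC] at this
        have hB0 : B (Q z) = 0 := (hgU B hBm).2.2 (Q z) (hQmem z)
        have : B (Q z) + C (Q z) = 0 := this
        rwa [hB0, zero_add] at this
      have : C (P z + Q z) = 0 := by rw [map_add, h1, h2, add_zero]
      rwa [hPQ z] at this
    rw [hBC, hC0, add_zero]
    exact hBm
  have hPP : ∀ x : V, P (P x) = P x := fun x => hPU (P x) (hPmem x)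
  have killQ : ∀ X Y Z : V, R (P X) (P Y) Z = R (P X) (P Y) (P Z) := by
    intro X Y Z
    conv_lhs => rw [← hPQ Z]
    rw [map_add, killW X Y (Q Z) (hQmem Z), add_zero]
  refine ⟨⟨?_, ?_, ?_⟩, ?_, cross⟩
  · intro X
    simp only [LinearMap.compl₁₂_apply]
    exact halt (P X)
  · intro X Y
    simp only [LinearMap.compl₁₂_apply]
    exact valU X Y
  · intro X Y Z
    simp only [LinearMap.compl₁₂_apply]
    rw [killQ X Y Z, killQ Y Z X, killQ Z X Y]
    exact hB (P X) (P Y) (P Z)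
  · intro X Y
    simp only [LinearMap.compl₁₂_apply, hPP]

end Aux

/-- If `V = V₁ ⊕ V₁ᗮ` is an orthogonal direct sum, `g₁ ⊆ so(V₁)` and `g₂ ⊆ so(V₁ᗮ)` are
Lie subalgebras (extended by zero to skew-adjoint endomorphisms of `V`), then
`K(g₁ ⊕ g₂)` is the internal direct sum of `K(g₁)` and `K(g₂)`. -/
theorem curv_of_direct_sum_of_algebras
    {V : Type*} [NormedAddCommGroup V] [InnerProductSpace ℝ V] [FiniteDimensional ℝ V]
    (V₁ : Submodule ℝ V)
    (g₁ g₂ : LieSubalgebra ℝ (Module.End ℝ V))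
    (hg₁ : ∀ A ∈ g₁, (∀ x y : V, ⟪A x, y⟫ = -⟪x, A y⟫) ∧
      (∀ x ∈ V₁, A x ∈ V₁) ∧ (∀ x ∈ V₁ᗮ, A x = 0))
    (hg₂ : ∀ A ∈ g₂, (∀ x y : V, ⟪A x, y⟫ = -⟪x, A y⟫) ∧
      (∀ x ∈ V₁ᗮ, A x ∈ V₁ᗮ) ∧ (∀ x ∈ V₁, A x = 0)) :
    (∀ R : V →ₗ[ℝ] V →ₗ[ℝ] Module.End ℝ V,
      IsAlgCurv (↑(g₁.toSubmodule ⊔ g₂.toSubmodule) : Set (Module.End ℝ V)) R →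
      ∃! p : (V →ₗ[ℝ] V →ₗ[ℝ] Module.End ℝ V) × (V →ₗ[ℝ] V →ₗ[ℝ] Module.End ℝ V),
        IsExtCurv V₁ (↑g₁ : Set (Module.End ℝ V)) p.1 ∧
        IsExtCurv V₁ᗮ (↑g₂ : Set (Module.End ℝ V)) p.2 ∧ R = p.1 + p.2) ∧
    (∀ R₁ R₂ : V →ₗ[ℝ] V →ₗ[ℝ] Module.End ℝ V,
      IsExtCurv V₁ (↑g₁ : Set (Module.End ℝ V)) R₁ →
      IsExtCurv V₁ᗮ (↑g₂ : Set (Module.End ℝ V)) R₂ →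
      IsAlgCurv (↑(g₁.toSubmodule ⊔ g₂.toSubmodule) : Set (Module.End ℝ V)) (R₁ + R₂)) := by
  set P : V →ₗ[ℝ] V := V₁.subtype.comp (V₁.orthogonalProjectionOnto).toLinearMap with hPdef
  set Q : V →ₗ[ℝ] V := V₁ᗮ.subtype.comp (V₁ᗮ.orthogonalProjectionOnto).toLinearMap with hQdef
  have hPapp : ∀ x : V, P x = (V₁.orthogonalProjectionOnto x : V) := fun x => rfl
  have hQapp : ∀ x : V, Q x = (V₁ᗮ.orthogonalProjectionOnto x : V) := fun x => rfl
  have hPmem : ∀ x : V, P x ∈ V₁ := fun x => (V₁.orthogonalProjectionOnto x).2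
  have hQmem : ∀ x : V, Q x ∈ V₁ᗮ := fun x => (V₁ᗮ.orthogonalProjectionOnto x).2
  have hPQ : ∀ x : V, P x + Q x = x := fun x =>
    V₁.starProjection_add_starProjection_orthogonal x
  have hPU : ∀ x ∈ V₁, P x = x := by
    intro x hx
    have := Submodule.orthogonalProjectionOnto_mem_subspace_eq_self (K := V₁) ⟨x, hx⟩
    rw [hPapp]
    exact congrArg Subtype.val this
  have hQW : ∀ x ∈ V₁ᗮ, Q x = x := by
    intro x hx
    have := Submodule.orthogonalProjectionOnto_mem_subspace_eq_self (K := V₁ᗮ) ⟨x, hx⟩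
    rw [hQapp]
    exact congrArg Subtype.val this
  have hQU : ∀ x ∈ V₁, Q x = 0 := by
    intro x hx
    have h := hPQ x
    rw [hPU x hx] at h
    -- x + Q x = x
    have := add_left_cancel (a := x) (b := Q x) (c := 0) (by rw [add_zero]; exact h)
    exact this
  have hPW : ∀ x ∈ V₁ᗮ, P x = 0 := by
    intro x hx
    have h := hPQ x
    rw [hQW x hx] at h
    -- P x + x = x
    have := add_right_cancel (a := P x) (b := x) (c := 0) (by rw [zero_add]; exact h)
    exact this
  have horth : ∀ u ∈ V₁, ∀ w ∈ V₁ᗮ, ⟪u, w⟫ = 0 := by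
    intro u hu w hw
    exact (Submodule.mem_orthogonal V₁ w).mp hw u hu
  have horth' : ∀ u ∈ V₁ᗮ, ∀ w ∈ V₁, ⟪u, w⟫ = 0 := by
    intro u hu w hw
    rw [real_inner_comm]
    exact horth w hw u hu
  have hg₁' : ∀ A ∈ (↑g₁ : Set (Module.End ℝ V)), (∀ x y : V, ⟪A x, y⟫ = -⟪x, A y⟫) ∧
      (∀ x ∈ V₁, A x ∈ V₁) ∧ (∀ x ∈ V₁ᗮ, A x = 0) := fun A hA => hg₁ A hA
  have hg₂' : ∀ A ∈ (↑g₂ : Set (Module.End ℝ V)), (∀ x y : V, ⟪A x, y⟫ = -⟪x, A y⟫) ∧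
      (∀ x ∈ V₁ᗮ, A x ∈ V₁ᗮ) ∧ (∀ x ∈ V₁, A x = 0) := fun A hA => hg₂ A hA
  have hS : ∀ A ∈ (↑(g₁.toSubmodule ⊔ g₂.toSubmodule) : Set (Module.End ℝ V)),
      ∃ B ∈ (↑g₁ : Set (Module.End ℝ V)), ∃ C ∈ (↑g₂ : Set (Module.End ℝ V)), A = B + C := by
    intro A hA
    rw [SetLike.mem_coe, Submodule.mem_sup] at hA
    obtain ⟨B, hB, C, hC, hBC⟩ := hA
    exact ⟨B, hB, C, hC, hBC.symm⟩
  have hS' : ∀ A ∈ (↑(g₁.toSubmodule ⊔ g₂.toSubmodule) : Set (Module.End ℝ V)),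
      ∃ B ∈ (↑g₂ : Set (Module.End ℝ V)), ∃ C ∈ (↑g₁ : Set (Module.End ℝ V)), A = B + C := by
    intro A hA
    obtain ⟨B, hB, C, hC, hBC⟩ := hS A hA
    exact ⟨C, hC, B, hB, by rw [hBC, add_comm]⟩
  constructor
  · -- existence and uniqueness of the decomposition
    intro R hR
    obtain ⟨hAC₁, hfac₁, cross⟩ := half V₁ V₁ᗮ (↑g₁) (↑g₂) _ hg₁' hg₂' hS horth
      P Q hPmem hQmem hPU hPQ R hR
    obtain ⟨hAC₂, hfac₂, cross'⟩ := half V₁ᗮ V₁ (↑g₂) (↑g₁) _ hg₂' hg₁' hS' horth'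
      Q P hQmem hPmem hQW (fun x => by rw [add_comm]; exact hPQ x) R hR
    refine ⟨(R.compl₁₂ P P, R.compl₁₂ Q Q), ⟨⟨hAC₁, ?_⟩, ⟨hAC₂, ?_⟩, ?_⟩, ?_⟩
    · intro X Y
      exact hfac₁ X Y
    · intro X Y
      exact hfac₂ X Y
    · -- R = R₁ + R₂
      ext X Y z
      show R X Y z = (R.compl₁₂ P P X Y + R.compl₁₂ Q Q X Y) z
      simp only [LinearMap.compl₁₂_apply]
      have expand : R X Y = R (P X) (P Y) + R (Q X) (Q Y) := by
        conv_lhs => rw [← hPQ X, ← hPQ Y]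
        simp only [map_add, LinearMap.add_apply]
        rw [cross (P X) (hPmem X) (Q Y) (hQmem Y), cross' (Q X) (hQmem X) (P Y) (hPmem Y)]
        abel
      rw [expand]
    · -- uniqueness
      rintro ⟨S₁, S₂⟩ ⟨⟨hSA₁, hSf₁⟩, ⟨hSA₂, hSf₂⟩, hsum⟩
      have hsum' : ∀ X Y : V, R X Y = S₁ X Y + S₂ X Y := by
        intro X Y
        rw [hsum]
        rfl
      have h₁ : S₁ = R.compl₁₂ P P := by
        ext X Y z
        have e1 : S₁ X Y = S₁ (P X) (P Y) := hSf₁ X Y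
        have e2 : S₂ (P X) (P Y) = 0 := by
          have := hSf₂ (P X) (P Y)
          rw [← hQapp, ← hQapp, hQU (P X) (hPmem X), hQU (P Y) (hPmem Y)] at this
          simp only [map_zero, LinearMap.zero_apply] at this
          exact this
        have := hsum' (P X) (P Y)
        rw [e2, add_zero] at this
        rw [e1, ← this]
        rfl
      have h₂ : S₂ = R.compl₁₂ Q Q := by
        ext X Y z
        have e1 : S₂ X Y = S₂ (Q X) (Q Y) := hSf₂ X Y
        have e2 : S₁ (Q X) (Q Y) = 0 := by
          have := hSf₁ (Q X) (Q Y)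
          rw [← hPapp, ← hPapp, hPW (Q X) (hQmem X), hPW (Q Y) (hQmem Y)] at this
          simp only [map_zero, LinearMap.zero_apply] at this
          exact this
        have := hsum' (Q X) (Q Y)
        rw [e2, zero_add] at this
        rw [e1, ← this]
        rfl
      exact Prod.ext h₁ h₂
  · -- converse: sums of extended curvature tensors are curvature tensors
    intro R₁ R₂ h₁ h₂
    obtain ⟨⟨halt₁, hval₁, hB₁⟩, _⟩ := h₁
    obtain ⟨⟨halt₂, hval₂, hB₂⟩, _⟩ := h₂
    refine ⟨?_, ?_, ?_⟩
    · intro X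
      show R₁ X X + R₂ X X = 0
      rw [halt₁ X, halt₂ X, add_zero]
    · intro X Y
      show R₁ X Y + R₂ X Y ∈ (↑(g₁.toSubmodule ⊔ g₂.toSubmodule) : Set (Module.End ℝ V))
      rw [SetLike.mem_coe]
      exact add_mem (Submodule.mem_sup_left (hval₁ X Y)) (Submodule.mem_sup_right (hval₂ X Y))
    · intro X Y Z
      have b₁ := hB₁ X Y Z
      have b₂ := hB₂ X Y Z
      show (R₁ X Y + R₂ X Y) Z + (R₁ Y Z + R₂ Y Z) X + (R₁ Z X + R₂ Z X) Y = 0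
      simp only [LinearMap.add_apply]
      calc R₁ X Y Z + R₂ X Y Z + (R₁ Y Z X + R₂ Y Z X) + (R₁ Z X Y + R₂ Z X Y)
          = (R₁ X Y Z + R₁ Y Z X + R₁ Z X Y) + (R₂ X Y Z + R₂ Y Z X + R₂ Z X Y) := by abel
        _ = 0 := by rw [b₁, b₂, add_zero]

end
end

section
/- Let V be a finite-dimensional real inner product space, g ⊆ so(V) a Lie subalgebra, and V = V₁ ⊕ V₂ an orthogonal direct sum decomposition into g-invariant subspaces. If the restriction homomorphisms g → so(V₁), A ↦ A|_{V₁}, and g → so(V₂), A ↦ A|_{V₂}, are both injective, then K(g) = {0}, i.e., the only alternating bilinear map R : V × V → g with b₁R = 0 is R = 0. -/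
open scoped RealInnerProductSpace

noncomputable section

attribute [local instance 100] LieRing.ofAssociativeRing

/-- If `g ⊆ so(V)` is a Lie subalgebra and `V = V₁ ⊕ V₁ᗮ` is an orthogonal decomposition
into `g`-invariant subspaces such that the restriction of `g` to each summand is
injective, then `K(g) = {0}`. -/
theorem curv_eq_zero_of_faithful_restrictions
    {V : Type*} [NormedAddCommGroup V] [InnerProductSpace ℝ V] [FiniteDimensional ℝ V]
    (g : LieSubalgebra ℝ (Module.End ℝ V))
    (hskew : ∀ A ∈ g, ∀ x y : V, ⟪A x, y⟫ = -⟪x, A y⟫)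
    (V₁ : Submodule ℝ V)
    (hinv₁ : ∀ A ∈ g, ∀ x ∈ V₁, A x ∈ V₁)
    (hinv₂ : ∀ A ∈ g, ∀ x ∈ V₁ᗮ, A x ∈ V₁ᗮ)
    (hfaith₁ : ∀ A ∈ g, (∀ x ∈ V₁, A x = 0) → A = 0)
    (hfaith₂ : ∀ A ∈ g, (∀ x ∈ V₁ᗮ, A x = 0) → A = 0) :
    ∀ R : V →ₗ[ℝ] V →ₗ[ℝ] Module.End ℝ V,
      IsAlgCurv (↑g : Set (Module.End ℝ V)) R → R = 0 := by
  intro R hR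
  obtain ⟨halt, hmem, hbianchi⟩ := hR
  have hanti : ∀ X Y : V, R X Y = - R Y X := by
    intro X Y
    have h := halt (X + Y)
    simp only [map_add, LinearMap.add_apply, halt, zero_add, add_zero] at h
    exact eq_neg_of_add_eq_zero_right h
  have pairsym : ∀ a b c d : V, ⟪R a b c, d⟫ = ⟪R c d a, b⟫ := by
    have swap12 : ∀ a b c d : V, ⟪R a b c, d⟫ = -⟪R b a c, d⟫ := by
      intro a b c d
      rw [hanti a b]
      simp [inner_neg_left]
    have swap34 : ∀ a b c d : V, ⟪R a b c, d⟫ = -⟪R a b d, c⟫ := by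
      intro a b c d
      rw [hskew _ (hmem a b), real_inner_comm]
    have bia : ∀ a b c d : V, ⟪R a b c, d⟫ + ⟪R b c a, d⟫ + ⟪R c a b, d⟫ = 0 := by
      intro a b c d
      rw [← inner_add_left, ← inner_add_left, hbianchi a b c, inner_zero_left]
    intro a b c d
    have h1 := bia a b c d
    have h2 := bia b c d a
    have h3 := bia c d a b
    have h4 := bia d a b c
    linarith [swap12 a b c d, swap34 a b c d, swap12 b c a d, swap34 b c a d,
      swap12 c a b d, swap34 c a b d, swap12 b c d a, swap34 b c d a,
      swap12 c d b a, swap34 c d b a, swap12 d b c a, swap34 d b c a,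
      swap12 c d a b, swap34 c d a b, swap12 d a c b, swap34 d a c b,
      swap12 a c d b, swap34 a c d b, swap12 d a b c, swap34 d a b c,
      swap12 a b d c, swap34 a b d c, swap12 b d a c, swap34 b d a c,
      swap34 b a c d, swap34 c b a d, swap34 a c b d, swap34 c b d a,
      swap34 d c b a, swap34 b d c a, swap34 d c a b, swap34 a d c b,
      swap34 c a d b, swap34 a d b c, swap34 b a d c, swap34 d b a c]
  have hmix : ∀ x ∈ V₁, ∀ u ∈ V₁ᗮ, R x u = 0 := by
    intro x hx u hu
    apply hfaith₁ _ (hmem x u)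
    intro z hz
    have h0 : ⟪R x u z, R x u z⟫ = 0 := by
      rw [pairsym]
      exact (Submodule.mem_orthogonal V₁ u).mp hu _ (hinv₁ _ (hmem z (R x u z)) x hx)
    exact inner_self_eq_zero.mp h0
  have h11 : ∀ x ∈ V₁, ∀ y ∈ V₁, R x y = 0 := by
    intro x hx y hy
    apply hfaith₂ _ (hmem x y)
    intro u hu
    have hb := hbianchi x y u
    have e1 : R y u = 0 := hmix y hy u hu
    have e2 : R u x = 0 := by rw [hanti, hmix x hx u hu, neg_zero]
    rw [e1, e2] at hb
    simpa using hb
  have h22 : ∀ u ∈ V₁ᗮ, ∀ v ∈ V₁ᗮ, R u v = 0 := by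
    intro u hu v hv
    apply hfaith₁ _ (hmem u v)
    intro x hx
    have hb := hbianchi u v x
    have e1 : R v x = 0 := by rw [hanti, hmix x hx v hv, neg_zero]
    have e2 : R x u = 0 := hmix x hx u hu
    rw [e1, e2] at hb
    simpa using hb
  apply LinearMap.ext; intro X
  apply LinearMap.ext; intro Y
  obtain ⟨x, hx, u, hu, rfl⟩ := V₁.exists_add_mem_mem_orthogonal X
  obtain ⟨y, hy, v, hv, rfl⟩ := V₁.exists_add_mem_mem_orthogonal Y
  simp only [map_add, LinearMap.add_apply, h11 x hx y hy, hmix x hx v hv,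
    h22 u hu v hv, LinearMap.zero_apply]
  rw [hanti u y, hmix y hy u hu]
  simp

end
end

section
/- Let V be a finite-dimensional real inner product space, g ⊆ so(V) a Lie subalgebra, and V = V₁ ⊕ V₂ an orthogonal direct sum decomposition into g-invariant subspaces. Define ĝ₁ := {A ∈ g : A|_{V₂} = 0} and ĝ₂ := {A ∈ g : A|_{V₁} = 0}, and regard ĝ₁|_{V₁} as a Lie subalgebra of so(V₁) and ĝ₂|_{V₂} as a Lie subalgebra of so(V₂). Then K(g) is the internal direct sum of the extensions to V of K(ĝ₁|_{V₁}) and of K(ĝ₂|_{V₂}): every algebraic curvature tensor R on V with values in g decomposes uniquely as R = R₁ + R₂, where Rᵢ is the extension of an algebraic curvature tensor on Vᵢ with values in ĝᵢ|_{Vᵢ}. -/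
open scoped RealInnerProductSpace

noncomputable section

attribute [local instance] LieRing.ofAssociativeRing

/-- The classical pair symmetry of algebraic curvature tensors. -/
lemma curv_pair_symm {V : Type*} [NormedAddCommGroup V] [InnerProductSpace ℝ V]
    (R : V →ₗ[ℝ] V →ₗ[ℝ] Module.End ℝ V)
    (halt : ∀ X : V, R X X = 0)
    (hsk : ∀ X Y z w : V, ⟪R X Y z, w⟫ = -⟪z, R X Y w⟫)
    (hb : ∀ X Y Z : V, R X Y Z + R Y Z X + R Z X Y = 0) :
    ∀ X Y Z W : V, ⟪R X Y Z, W⟫ = ⟪R Z W X, Y⟫ := by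
  have hswap : ∀ X Y : V, R X Y = - R Y X := by
    intro X Y
    have h := halt (X + Y)
    simp [map_add, halt] at h
    linear_combination (norm := abel) h
  have h1 : ∀ X Y Z W : V, ⟪R X Y Z, W⟫ = -⟪R Y X Z, W⟫ := by
    intro X Y Z W; rw [hswap X Y]; simp
  have h2 : ∀ X Y Z W : V, ⟪R X Y Z, W⟫ = -⟪R X Y W, Z⟫ := by
    intro X Y Z W; rw [hsk X Y Z W, real_inner_comm]
  have h3 : ∀ X Y Z W : V, ⟪R X Y Z, W⟫ + ⟪R Y Z X, W⟫ + ⟪R Z X Y, W⟫ = 0 := by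
    intro X Y Z W
    have := congrArg (fun v => ⟪v, W⟫) (hb X Y Z)
    simpa [inner_add_left] using this
  have key : ∀ X Y Z W : V, ⟪R Z X Y, W⟫ = ⟪R Y W Z, X⟫ := by
    intro X Y Z W
    have b1 := h3 X Y Z W
    have b2 := h3 Y Z W X
    have b3 := h3 Z W X Y
    have b4 := h3 W X Y Z
    have e1 : ⟪R Y Z W, X⟫ = -⟪R Y Z X, W⟫ := h2 Y Z W X
    have e2 : ⟪R Z W Y, X⟫ = -⟪R Z W X, Y⟫ := h2 Z W Y X
    have e3 : ⟪R W Y Z, X⟫ = ⟪R Y W X, Z⟫ := by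
      rw [h1 W Y Z X, h2 Y W Z X]; ring
    have e4 : ⟪R W X Z, Y⟫ = -⟪R W X Y, Z⟫ := h2 W X Z Y
    have e5 : ⟪R X Z W, Y⟫ = ⟪R Z X Y, W⟫ := by
      rw [h1 X Z W Y, h2 Z X W Y]; ring
    have e6 : ⟪R X Y W, Z⟫ = -⟪R X Y Z, W⟫ := h2 X Y W Z
    have e8 : ⟪R Y W Z, X⟫ = -⟪R Y W X, Z⟫ := h2 Y W Z X
    linarith
  intro X Y Z W
  linarith [key Y Z X W]

/-- Let `g ⊆ so(V)` be a Lie subalgebra and `V = V₁ ⊕ V₁ᗮ` an orthogonal decomposition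
into `g`-invariant subspaces.  With `ĝ₁ = {A ∈ g : A|_{V₁ᗮ} = 0}` and
`ĝ₂ = {A ∈ g : A|_{V₁} = 0}`, the space `K(g)` is the internal direct sum of the
extensions of `K(ĝ₁)` and `K(ĝ₂)`. -/
theorem curv_direct_sum_decomposition
    {V : Type*} [NormedAddCommGroup V] [InnerProductSpace ℝ V] [FiniteDimensional ℝ V]
    (g : LieSubalgebra ℝ (Module.End ℝ V))
    (hskew : ∀ A ∈ g, ∀ x y : V, ⟪A x, y⟫ = -⟪x, A y⟫)
    (V₁ : Submodule ℝ V)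
    (hinv₁ : ∀ A ∈ g, ∀ x ∈ V₁, A x ∈ V₁)
    (hinv₂ : ∀ A ∈ g, ∀ x ∈ V₁ᗮ, A x ∈ V₁ᗮ) :
    ∀ R : V →ₗ[ℝ] V →ₗ[ℝ] Module.End ℝ V,
      IsAlgCurv (↑g : Set (Module.End ℝ V)) R →
      ∃! p : (V →ₗ[ℝ] V →ₗ[ℝ] Module.End ℝ V) × (V →ₗ[ℝ] V →ₗ[ℝ] Module.End ℝ V),
        IsExtCurv V₁ {A : Module.End ℝ V | A ∈ g ∧ ∀ x ∈ V₁ᗮ, A x = 0} p.1 ∧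
        IsExtCurv V₁ᗮ {A : Module.End ℝ V | A ∈ g ∧ ∀ x ∈ V₁, A x = 0} p.2 ∧
        R = p.1 + p.2 := by
  intro R hR
  obtain ⟨halt, hmem, hb⟩ := hR
  -- abbreviations for projections, as maps V →ₗ V
  set pl : V →ₗ[ℝ] V := V₁.subtype ∘ₗ (V₁.orthogonalProjectionOnto : V →L[ℝ] V₁).toLinearMap
    with hpl
  set ql : V →ₗ[ℝ] V := V₁ᗮ.subtype ∘ₗ (V₁ᗮ.orthogonalProjectionOnto : V →L[ℝ] V₁ᗮ).toLinearMap
    with hql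
  have hpl_apply : ∀ x : V, pl x = (V₁.orthogonalProjectionOnto x : V) := fun _ => rfl
  have hql_apply : ∀ x : V, ql x = (V₁ᗮ.orthogonalProjectionOnto x : V) := fun _ => rfl
  have hpl_mem : ∀ x : V, pl x ∈ V₁ := fun x => (V₁.orthogonalProjectionOnto x).2
  have hql_mem : ∀ x : V, ql x ∈ V₁ᗮ := fun x => (V₁ᗮ.orthogonalProjectionOnto x).2
  have hpl_eq : ∀ x ∈ V₁, pl x = x := by
    intro x hx; exact Submodule.starProjection_eq_self_iff.mpr hx
  have hql_eq : ∀ x ∈ V₁ᗮ, ql x = x := by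
    intro x hx; exact Submodule.starProjection_eq_self_iff.mpr hx
  have hpl_zero : ∀ x ∈ V₁ᗮ, pl x = 0 := by
    intro x hx
    rw [hpl_apply, Submodule.orthogonalProjectionOnto_apply_of_mem_orthogonal hx]
    simp
  have hql_zero : ∀ x ∈ V₁, ql x = 0 := by
    intro x hx
    rw [hql_apply, Submodule.orthogonalProjectionOnto_apply_of_mem_orthogonal
      (V₁.le_orthogonal_orthogonal hx)]
    simp
  have hdecomp : ∀ x : V, pl x + ql x = x := fun x =>
    V₁.starProjection_add_starProjection_orthogonal x
  -- R is antisymmetric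
  have hswap : ∀ X Y : V, R X Y = - R Y X := by
    intro X Y
    have h := halt (X + Y)
    simp [map_add, halt] at h
    linear_combination (norm := abel) h
  -- pair symmetry for R
  have hsym := curv_pair_symm R halt
    (fun X Y z w => hskew (R X Y) (hmem X Y) z w) hb
  -- key lemma A: mixed arguments kill R
  have hA : ∀ x ∈ V₁, ∀ u ∈ V₁ᗮ, R x u = 0 := by
    intro x hx u hu
    ext z
    show R x u z = 0
    have hzw : ∀ w : V, ⟪R x u z, w⟫ = 0 := by
      intro w
      have hz := hdecomp z
      have hw := hdecomp w
      have c11 : ⟪R x u (pl z), pl w⟫ = 0 := by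
        rw [hsym x u (pl z) (pl w)]
        exact Submodule.inner_right_of_mem_orthogonal
          (hinv₁ _ (hmem (pl z) (pl w)) x hx) hu
      have c12 : ⟪R x u (pl z), ql w⟫ = 0 :=
        Submodule.inner_right_of_mem_orthogonal
          (hinv₁ _ (hmem x u) _ (hpl_mem z)) (hql_mem w)
      have c21 : ⟪R x u (ql z), pl w⟫ = 0 :=
        Submodule.inner_left_of_mem_orthogonal (hpl_mem w)
          (hinv₂ _ (hmem x u) _ (hql_mem z))
      have c22 : ⟪R x u (ql z), ql w⟫ = 0 := by
        rw [hsym x u (ql z) (ql w)]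
        exact Submodule.inner_right_of_mem_orthogonal
          (hinv₁ _ (hmem (ql z) (ql w)) x hx) hu
      calc ⟪R x u z, w⟫ = ⟪R x u (pl z + ql z), pl w + ql w⟫ := by rw [hz, hw]
        _ = 0 := by
            rw [map_add, inner_add_left, inner_add_right, inner_add_right, c11, c12,
              c21, c22]; ring
    have := hzw (R x u z)
    exact inner_self_eq_zero.mp this
  -- key lemma B: R of two V₁ vectors kills V₁ᗮ
  have hB : ∀ x ∈ V₁, ∀ y ∈ V₁, ∀ u ∈ V₁ᗮ, R x y u = 0 := by
    intro x hx y hy u hu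
    have h := hb x y u
    have h1 : R y u = 0 := hA y hy u hu
    have h2 : R u x = 0 := by rw [hswap u x, hA x hx u hu]; simp
    rw [h1, h2] at h
    simpa using h
  have hB' : ∀ u ∈ V₁ᗮ, ∀ v ∈ V₁ᗮ, ∀ x ∈ V₁, R u v x = 0 := by
    intro u hu v hv x hx
    have h := hb u v x
    have h1 : R v x = 0 := by rw [hswap v x, hA x hx v hv]; simp
    have h2 : R x u = 0 := hA x hx u hu
    rw [h1, h2] at h
    simpa using h
  -- the two components
  set R₁ : V →ₗ[ℝ] V →ₗ[ℝ] Module.End ℝ V := R.compl₁₂ pl pl with hR₁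
  set R₂ : V →ₗ[ℝ] V →ₗ[ℝ] Module.End ℝ V := R.compl₁₂ ql ql with hR₂
  have hR₁app : ∀ X Y : V, R₁ X Y = R (pl X) (pl Y) := fun _ _ => rfl
  have hR₂app : ∀ X Y : V, R₂ X Y = R (ql X) (ql Y) := fun _ _ => rfl
  have hplP : ∀ X : V, pl ((V₁.orthogonalProjectionOnto X : V)) = pl X := fun X =>
    (hpl_eq _ (Submodule.coe_mem _)).trans (hpl_apply X).symm
  have hqlQ : ∀ X : V, ql ((V₁ᗮ.orthogonalProjectionOnto X : V)) = ql X := fun X =>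
    (hql_eq _ (Submodule.coe_mem _)).trans (hql_apply X).symm
  refine ⟨(R₁, R₂), ⟨⟨⟨?_, ?_, ?_⟩, ?_⟩, ⟨⟨?_, ?_, ?_⟩, ?_⟩, ?_⟩, ?_⟩
  · -- R₁ alternating
    intro X; rw [hR₁app, halt]
  · -- R₁ values in ĝ₁
    intro X Y
    exact ⟨hmem _ _, fun u hu => hB _ (hpl_mem X) _ (hpl_mem Y) u hu⟩
  · -- R₁ Bianchi
    intro X Y Z
    have hred : ∀ X Y Z : V, R₁ X Y Z = R (pl X) (pl Y) (pl Z) := by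
      intro X Y Z
      rw [hR₁app]
      conv_lhs => rw [← hdecomp Z]
      rw [map_add, hB _ (hpl_mem X) _ (hpl_mem Y) _ (hql_mem Z), add_zero]
    rw [hred, hred, hred]
    exact hb (pl X) (pl Y) (pl Z)
  · -- R₁ factors through projection
    intro X Y
    rw [hR₁app, hR₁app, hplP, hplP]
  · -- R₂ alternating
    intro X; rw [hR₂app, halt]
  · -- R₂ values in ĝ₂
    intro X Y
    exact ⟨hmem _ _, fun x hx => hB' _ (hql_mem X) _ (hql_mem Y) x hx⟩
  · -- R₂ Bianchi
    intro X Y Z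
    have hred : ∀ X Y Z : V, R₂ X Y Z = R (ql X) (ql Y) (ql Z) := by
      intro X Y Z
      rw [hR₂app]
      conv_lhs => rw [← hdecomp Z]
      rw [map_add, hB' _ (hql_mem X) _ (hql_mem Y) _ (hpl_mem Z), zero_add]
    rw [hred, hred, hred]
    exact hb (ql X) (ql Y) (ql Z)
  · -- R₂ factors through projection
    intro X Y
    rw [hR₂app, hR₂app, hqlQ, hqlQ]
  · -- R = R₁ + R₂
    ext X Y : 2
    have hmix1 : R (pl X) (ql Y) = 0 := hA _ (hpl_mem X) _ (hql_mem Y)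
    have hmix2 : R (ql X) (pl Y) = 0 := by
      rw [hswap, hA _ (hpl_mem Y) _ (hql_mem X)]; simp
    have hL : R X Y = R (pl X) (pl Y) + R (ql X) (ql Y) := by
      conv_lhs => rw [← hdecomp X, ← hdecomp Y]
      simp only [map_add, LinearMap.add_apply]
      rw [hmix1, hmix2]
      abel
    calc R X Y = R (pl X) (pl Y) + R (ql X) (ql Y) := hL
      _ = ((R₁, R₂).1 + (R₁, R₂).2) X Y := by
          simp only [LinearMap.add_apply]
          rw [hR₁app, hR₂app]
  · -- uniqueness
    rintro ⟨S₁, S₂⟩ ⟨⟨_, hS₁fac⟩, ⟨_, hS₂fac⟩, hsum⟩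
    have hSsum : ∀ X Y : V, R X Y = S₁ X Y + S₂ X Y := by
      intro X Y; rw [hsum]; rfl
    have hQpl : ∀ X : V, ((V₁ᗮ.orthogonalProjectionOnto (pl X) : V)) = (0 : V) := by
      intro X
      rw [Submodule.orthogonalProjectionOnto_apply_of_mem_orthogonal
        (V₁.le_orthogonal_orthogonal (hpl_mem X))]
      simp
    have hPql : ∀ X : V, ((V₁.orthogonalProjectionOnto (ql X) : V)) = (0 : V) := by
      intro X
      rw [Submodule.orthogonalProjectionOnto_apply_of_mem_orthogonal (hql_mem X)]
      simp
    have hS₂pl : ∀ X Y : V, S₂ (pl X) (pl Y) = 0 := by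
      intro X Y
      calc S₂ (pl X) (pl Y)
          = S₂ ((V₁ᗮ.orthogonalProjectionOnto (pl X) : V)) ((V₁ᗮ.orthogonalProjectionOnto (pl Y) : V)) :=
            hS₂fac (pl X) (pl Y)
        _ = 0 := by rw [hQpl, hQpl]; simp
    have hS₁ql : ∀ X Y : V, S₁ (ql X) (ql Y) = 0 := by
      intro X Y
      calc S₁ (ql X) (ql Y)
          = S₁ ((V₁.orthogonalProjectionOnto (ql X) : V)) ((V₁.orthogonalProjectionOnto (ql Y) : V)) :=
            hS₁fac (ql X) (ql Y)
        _ = 0 := by rw [hPql, hPql]; simp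
    have h1 : S₁ = R₁ := by
      ext X Y : 2
      have hs := hSsum (pl X) (pl Y)
      rw [hS₂pl, add_zero] at hs
      rw [hR₁app, hs]
      exact hS₁fac X Y
    have h2 : S₂ = R₂ := by
      ext X Y : 2
      have hs := hSsum (ql X) (ql Y)
      rw [hS₁ql, zero_add] at hs
      rw [hR₂app, hs]
      exact hS₂fac X Y
    exact Prod.ext h1 h2

end
end

section
/- Let V be a finite-dimensional real inner product space and g ⊆ so(V) a Lie subalgebra. Suppose there exist an integer k ≥ 2, a real representation W of g, and a g-equivariant linear isomorphism from V onto the direct sum of k copies of W (i.e., V ≅ W^k as g-modules). Then K(g) = {0}: the only alternating bilinear map R : V × V → g with b₁R = 0 is R = 0. -/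
open scoped RealInnerProductSpace

noncomputable section

attribute [local instance 100] LieRing.ofAssociativeRing

/-- If `g ⊆ so(V)` is a Lie subalgebra and `V` is `g`-equivariantly isomorphic to a
direct sum of `k ≥ 2` copies of a representation `W` of `g`, then `K(g) = {0}`. -/
theorem curv_eq_zero_of_isotypic
    {V : Type*} [NormedAddCommGroup V] [InnerProductSpace ℝ V] [FiniteDimensional ℝ V]
    (g : LieSubalgebra ℝ (Module.End ℝ V))
    (hskew : ∀ A ∈ g, ∀ x y : V, ⟪A x, y⟫ = -⟪x, A y⟫)
    {k : ℕ} (hk : 2 ≤ k)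
    {W : Type*} [AddCommGroup W] [Module ℝ W]
    (ρ : g →ₗ⁅ℝ⁆ Module.End ℝ W)
    (e : V ≃ₗ[ℝ] (Fin k → W))
    (he : ∀ (A : g) (v : V) (i : Fin k), e ((A : Module.End ℝ V) v) i = ρ A (e v i)) :
    ∀ R : V →ₗ[ℝ] V →ₗ[ℝ] Module.End ℝ V,
      IsAlgCurv (↑g : Set (Module.End ℝ V)) R → R = 0 := by
  rintro R ⟨halt, hg, hb⟩
  -- antisymmetry of R
  have hanti : ∀ X Y : V, R Y X = - R X Y := by
    intro X Y
    have h := halt (X + Y)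
    simp only [map_add, LinearMap.add_apply, halt, zero_add, add_zero] at h
    exact eq_neg_of_add_eq_zero_left h
  -- the W-valued curvature
  set ρ' : V → V → Module.End ℝ W := fun X Y => ρ ⟨R X Y, hg X Y⟩ with hρ'
  have hρ'anti : ∀ X Y : V, ρ' Y X = - ρ' X Y := by
    intro X Y
    have h : (⟨R Y X, hg Y X⟩ : g) = -⟨R X Y, hg X Y⟩ := Subtype.ext (hanti X Y)
    rw [hρ']
    simp only
    rw [h, map_neg ρ]
  have heK : ∀ (X Y Z : V) (i : Fin k), e (R X Y Z) i = ρ' X Y (e Z i) :=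
    fun X Y Z i => he ⟨R X Y, hg X Y⟩ Z i
  -- componentwise Bianchi identity
  have hbC : ∀ (X Y Z : V) (i : Fin k),
      ρ' X Y (e Z i) + ρ' Y Z (e X i) + ρ' Z X (e Y i) = 0 := by
    intro X Y Z i
    have h2 : e (R X Y Z + R Y Z X + R Z X Y) i = e 0 i := by rw [hb X Y Z]
    simp only [map_add, Pi.add_apply, map_zero, Pi.zero_apply, heK] at h2
    exact h2
  -- slot inclusions
  set ι : Fin k → W → V := fun i w => e.symm (Pi.single i w) with hι
  have hei : ∀ (i : Fin k) (w : W), e (ι i w) = Pi.single i w := fun i w =>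
    e.apply_symm_apply _
  haveI : Nontrivial (Fin k) :=
    ⟨⟨⟨0, by omega⟩, ⟨1, by omega⟩, by simp [Fin.ext_iff]⟩⟩
  -- the auxiliary inner product on W, transported from slot i0
  set i0 : Fin k := ⟨0, by omega⟩ with hi0
  set Bf : W → W → ℝ := fun w u => ⟪e.symm (Pi.single i0 w), e.symm (Pi.single i0 u)⟫
    with hBf
  have hBsymm : ∀ w u, Bf w u = Bf u w := fun w u => real_inner_comm _ _
  have hBdef : ∀ w, Bf w w = 0 → w = 0 := by
    intro w h
    have h1 : e.symm (Pi.single i0 w) = 0 := inner_self_eq_zero.mp h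
    have h2 : Pi.single i0 w = (0 : Fin k → W) := by
      apply e.symm.injective
      simpa using h1
    have h3 := congrFun h2 i0
    simpa using h3
  have hAe : ∀ (A : g) (w : W),
      e ((A : Module.End ℝ V) (e.symm (Pi.single i0 w))) = Pi.single i0 (ρ A w) := by
    intro A w
    funext m
    rw [he A _ m, e.apply_symm_apply]
    rcases eq_or_ne m i0 with rfl | hm
    · simp
    · rw [Pi.single_eq_of_ne hm, Pi.single_eq_of_ne hm, map_zero]
  have hBskew : ∀ (A : g) (w u : W), Bf (ρ A w) u = - Bf w (ρ A u) := by
    intro A w u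
    have h1 : e.symm (Pi.single i0 (ρ A w))
        = (A : Module.End ℝ V) (e.symm (Pi.single i0 w)) := by
      rw [← hAe A w, e.symm_apply_apply]
    have h2 : e.symm (Pi.single i0 (ρ A u))
        = (A : Module.End ℝ V) (e.symm (Pi.single i0 u)) := by
      rw [← hAe A u, e.symm_apply_apply]
    rw [hBf]
    simp only
    rw [h1, h2]
    exact hskew A A.2 _ _
  -- the key vanishing on slot vectors
  have hzero : ∀ (i j : Fin k) (x y : W), ρ' (ι i x) (ι j y) = 0 := by
    intro i j x y
    rcases eq_or_ne i j with rfl | hij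
    · -- diagonal case
      obtain ⟨l, hl⟩ := exists_ne i
      ext z
      have h := hbC (ι i x) (ι i y) (ι l z) l
      rw [hei, hei, hei, Pi.single_eq_same, Pi.single_eq_of_ne hl,
        Pi.single_eq_of_ne hl, map_zero, map_zero, add_zero, add_zero] at h
      simpa using h
    · -- off-diagonal case
      have hji : j ≠ i := hij.symm
      -- Fact A : symmetry in the first and third slots
      have hA : ∀ x y z : W, ρ' (ι i x) (ι j y) z = ρ' (ι i z) (ι j y) x := by
        intro x y z
        have h := hbC (ι i x) (ι j y) (ι i z) i
        rw [hei, hei, hei, Pi.single_eq_same, Pi.single_eq_same,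
          Pi.single_eq_of_ne hij, map_zero, add_zero, hρ'anti (ι i z) (ι j y),
          LinearMap.neg_apply] at h
        have h' : ρ' (ι i x) (ι j y) z - ρ' (ι i z) (ι j y) x = 0 := by
          rw [sub_eq_add_neg]; exact h
        exact sub_eq_zero.mp h'
      -- skewness of the operators w.r.t. Bf
      have hsk : ∀ a c d : W,
          Bf (ρ' (ι i a) (ι j y) c) d = - Bf c (ρ' (ι i a) (ι j y) d) := by
        intro a c d
        exact hBskew ⟨R (ι i a) (ι j y), hg _ _⟩ c d
      -- the q-tensor argument
      have hq : ∀ a c d : W, Bf (ρ' (ι i a) (ι j y) c) d = 0 := by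
        intro a c d
        have key : Bf (ρ' (ι i a) (ι j y) c) d = - Bf (ρ' (ι i a) (ι j y) c) d := by
          calc Bf (ρ' (ι i a) (ι j y) c) d
              = Bf (ρ' (ι i c) (ι j y) a) d := by rw [hA a y c]
            _ = - Bf (ρ' (ι i c) (ι j y) d) a := by
                rw [hsk c a d, hBsymm a (ρ' (ι i c) (ι j y) d)]
            _ = - Bf (ρ' (ι i d) (ι j y) c) a := by rw [hA c y d]
            _ = Bf (ρ' (ι i d) (ι j y) a) c := by
                rw [hsk d c a, hBsymm c (ρ' (ι i d) (ι j y) a)]; ring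
            _ = Bf (ρ' (ι i a) (ι j y) d) c := by rw [hA d y a]
            _ = - Bf (ρ' (ι i a) (ι j y) c) d := by
                rw [hsk a d c, hBsymm d (ρ' (ι i a) (ι j y) c)]
        linarith
      ext z
      have h0 := hq x z (ρ' (ι i x) (ι j y) z)
      have := hBdef _ h0
      simpa using this
  -- additivity of ρ'
  have hzl : ∀ Y : V, ρ' 0 Y = 0 := by
    intro Y
    have h : (⟨R 0 Y, hg 0 Y⟩ : g) = 0 := Subtype.ext (by simp)
    rw [hρ']; simp only; rw [h, map_zero ρ]
  have hzr : ∀ X : V, ρ' X 0 = 0 := by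
    intro X
    have h : (⟨R X 0, hg X 0⟩ : g) = 0 := Subtype.ext (by simp)
    rw [hρ']; simp only; rw [h, map_zero ρ]
  have haddl : ∀ X X' Y : V, ρ' (X + X') Y = ρ' X Y + ρ' X' Y := by
    intro X X' Y
    have h : (⟨R (X + X') Y, hg _ _⟩ : g)
        = ⟨R X Y, hg X Y⟩ + ⟨R X' Y, hg X' Y⟩ := Subtype.ext (by simp)
    rw [hρ']; simp only; rw [h, map_add ρ]
  have haddr : ∀ X Y Y' : V, ρ' X (Y + Y') = ρ' X Y + ρ' X Y' := by
    intro X Y Y'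
    have h : (⟨R X (Y + Y'), hg _ _⟩ : g)
        = ⟨R X Y, hg X Y⟩ + ⟨R X Y', hg X Y'⟩ := Subtype.ext (by simp)
    rw [hρ']; simp only; rw [h, map_add ρ]
  have hsuml : ∀ (s : Finset (Fin k)) (f : Fin k → V) (Y : V),
      ρ' (∑ i ∈ s, f i) Y = ∑ i ∈ s, ρ' (f i) Y := by
    intro s f Y
    classical
    induction s using Finset.induction_on with
    | empty => simpa using hzl Y
    | insert _ _ hns ih =>
        rw [Finset.sum_insert hns, Finset.sum_insert hns, haddl, ih]
  have hsumr : ∀ (X : V) (s : Finset (Fin k)) (f : Fin k → V),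
      ρ' X (∑ i ∈ s, f i) = ∑ i ∈ s, ρ' X (f i) := by
    intro X s f
    classical
    induction s using Finset.induction_on with
    | empty => simpa using hzr X
    | insert _ _ hns ih =>
        rw [Finset.sum_insert hns, Finset.sum_insert hns, haddr, ih]
  -- decomposition of vectors into slot parts
  have hdec : ∀ X : V, X = ∑ i, ι i (e X i) := by
    intro X
    have h : (∑ i, Pi.single i (e X i)) = e X := Finset.univ_sum_single (e X)
    calc X = e.symm (e X) := (e.symm_apply_apply X).symm
      _ = e.symm (∑ i, Pi.single i (e X i)) := by rw [h]
      _ = ∑ i, ι i (e X i) := by rw [map_sum]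
  have hρ'zero : ∀ X Y : V, ρ' X Y = 0 := by
    intro X Y
    calc ρ' X Y = ρ' (∑ i, ι i (e X i)) (∑ j, ι j (e Y j)) := by
          rw [← hdec X, ← hdec Y]
      _ = ∑ i, ρ' (ι i (e X i)) (∑ j, ι j (e Y j)) := hsuml _ _ _
      _ = ∑ i, ∑ j, ρ' (ι i (e X i)) (ι j (e Y j)) := by
          exact Finset.sum_congr rfl fun i _ => hsumr _ _ _
      _ = 0 := by
          apply Finset.sum_eq_zero
          intro i _
          apply Finset.sum_eq_zero
          intro j _
          exact hzero i j _ _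
  -- conclusion
  ext X Y Z
  have h : e (R X Y Z) = e 0 := by
    funext m
    rw [heK X Y Z m, hρ'zero X Y]
    simp
  simpa using e.injective h

end
end

section
/- Let V be a finite-dimensional real inner product space and let g ⊆ so(V) be a simple Lie subalgebra. Suppose there is a g-invariant subspace V₁ ⊆ V such that g acts nontrivially both on V₁ and on its orthogonal complement V₁^⊥ (i.e., for each of the two subspaces there exist A ∈ g and a vector X in that subspace with AX ≠ 0). Then K(g) = {0}: the only alternating bilinear map R : V × V → g with b₁R = 0 is R = 0. -/
open scoped RealInnerProductSpace

noncomputable section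

attribute [local instance 100] LieRing.ofAssociativeRing
attribute [local instance 100] LieAlgebra.ofAssociativeAlgebra

/-- The Lie ideal of a Lie subalgebra `g ⊆ End V` consisting of the operators that
annihilate a `g`-invariant subspace `W`. -/
def killIdeal {V : Type*} [NormedAddCommGroup V] [InnerProductSpace ℝ V]
    (g : LieSubalgebra ℝ (Module.End ℝ V)) (W : Submodule ℝ V)
    (hW : ∀ A ∈ g, ∀ x ∈ W, A x ∈ W) : LieIdeal ℝ g where
  carrier := {A | ∀ x ∈ W, (A : Module.End ℝ V) x = 0}
  add_mem' := by
    intro A B hA hB x hx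
    show ((A : Module.End ℝ V) + (B : Module.End ℝ V)) x = 0
    rw [LinearMap.add_apply, hA x hx, hB x hx, add_zero]
  zero_mem' := fun x _ => rfl
  smul_mem' := by
    intro c A hA x hx
    show (c • (A : Module.End ℝ V)) x = 0
    rw [LinearMap.smul_apply, hA x hx, smul_zero]
  lie_mem := by
    intro B A hA x hx
    have hc : ((⁅B, A⁆ : g) : Module.End ℝ V) = (B : Module.End ℝ V) * A - A * B := by
      rw [LieSubalgebra.coe_bracket, Ring.lie_def]
    rw [hc]
    simp [LinearMap.sub_apply, Module.End.mul_apply, hA x hx, hA _ (hW B B.2 x hx)]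

theorem mem_killIdeal_iff {V : Type*} [NormedAddCommGroup V] [InnerProductSpace ℝ V]
    (g : LieSubalgebra ℝ (Module.End ℝ V)) (W : Submodule ℝ V)
    (hW : ∀ A ∈ g, ∀ x ∈ W, A x ∈ W) (A : g) :
    A ∈ killIdeal g W hW ↔ ∀ x ∈ W, (A : Module.End ℝ V) x = 0 := Iff.rfl

/-- If `g ⊆ so(V)` is a simple Lie subalgebra with an invariant subspace `V₁` such that
`g` acts nontrivially both on `V₁` and on `V₁ᗮ`, then `K(g) = {0}`. -/
theorem curv_eq_zero_of_simple_two_pieces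
    {V : Type*} [NormedAddCommGroup V] [InnerProductSpace ℝ V] [FiniteDimensional ℝ V]
    (g : LieSubalgebra ℝ (Module.End ℝ V))
    (hskew : ∀ A ∈ g, ∀ x y : V, ⟪A x, y⟫ = -⟪x, A y⟫)
    (hsimple : LieAlgebra.IsSimple ℝ g)
    (V₁ : Submodule ℝ V)
    (hinv : ∀ A ∈ g, ∀ x ∈ V₁, A x ∈ V₁)
    (h₁ : ∃ A ∈ g, ∃ x ∈ V₁, A x ≠ 0)
    (h₂ : ∃ A ∈ g, ∃ x ∈ V₁ᗮ, A x ≠ 0) :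
    ∀ R : V →ₗ[ℝ] V →ₗ[ℝ] Module.End ℝ V,
      IsAlgCurv (↑g : Set (Module.End ℝ V)) R → R = 0 := by
  intro R hR
  obtain ⟨halt, hg, hb⟩ := hR
  -- skew-symmetry in the last two slots
  have hsk : ∀ X Y Z W : V, ⟪R X Y Z, W⟫ = -⟪R X Y W, Z⟫ := by
    intro X Y Z W
    rw [hskew _ (hg X Y), real_inner_comm]
  -- antisymmetry in the first two slots
  have hanti : ∀ X Y : V, R X Y = -R Y X := by
    intro X Y
    have h := halt (X + Y)
    rw [map_add] at h
    simp only [LinearMap.add_apply, map_add, halt X, halt Y, zero_add, add_zero] at h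
    rw [add_comm] at h
    exact eq_neg_of_add_eq_zero_left h
  have ha1 : ∀ X Y Z W : V, ⟪R Y X Z, W⟫ = -⟪R X Y Z, W⟫ := by
    intro X Y Z W
    rw [hanti Y X]
    simp
  -- Bianchi paired with a vector
  have hB : ∀ X Y Z W : V, ⟪R X Y Z, W⟫ + ⟪R Y Z X, W⟫ + ⟪R Z X Y, W⟫ = 0 := by
    intro X Y Z W
    have h : ⟪R X Y Z + R Y Z X + R Z X Y, W⟫ = 0 := by rw [hb X Y Z, inner_zero_left]
    rw [inner_add_left, inner_add_left] at h
    linarith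
  -- pair symmetry
  have hps : ∀ X Y Z W : V, ⟪R X Y Z, W⟫ = ⟪R Z W X, Y⟫ := by
    intro X Y Z W
    have B1 := hB X Y Z W
    have B2 := hB Y Z W X
    have B3 := hB Z W X Y
    have B4 := hB W X Y Z
    have c1 := ha1 X Z Y W
    have c2 := hsk Y Z W X
    have c3 := hsk Z W Y X
    have c4 := ha1 Y W Z X
    have c5 := hsk Y W Z X
    have c6 := ha1 X W Z Y
    have c7 := hsk X W Z Y
    have c8 := hsk X Z W Y
    have c9 := ha1 X W Y Z
    have c10 := hsk X Y W Z
    linarith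
  -- V₁ᗮ is invariant
  have hinv' : ∀ A ∈ g, ∀ x ∈ V₁ᗮ, A x ∈ V₁ᗮ := by
    intro A hA x hx
    rw [Submodule.mem_orthogonal]
    intro u hu
    have h1 : ⟪A x, u⟫ = -⟪x, A u⟫ := hskew A hA x u
    have h2 : ⟪x, A u⟫ = 0 := Submodule.inner_left_of_mem_orthogonal (hinv A hA u hu) hx
    rw [real_inner_comm, h1, h2, neg_zero]
  have hmem0 : ∀ v : V, v ∈ V₁ → v ∈ V₁ᗮ → v = 0 := by
    intro v h1 h2
    have := Submodule.inner_right_of_mem_orthogonal h1 h2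
    exact inner_self_eq_zero.mp this
  -- R of two V₁ vectors kills V₁ᗮ
  have hz1 : ∀ Z ∈ V₁, ∀ X ∈ V₁, ∀ Y ∈ V₁ᗮ, R Z X Y = 0 := by
    intro Z hZ X hX Y hY
    have hbi := hb X Y Z
    have m1 : R X Y Z ∈ V₁ := hinv _ (hg X Y) Z hZ
    have m2 : R Y Z X ∈ V₁ := hinv _ (hg Y Z) X hX
    have m3 : R Z X Y ∈ V₁ᗮ := hinv' _ (hg Z X) Y hY
    have heq : R Z X Y = -R X Y Z - R Y Z X := by
      linear_combination (norm := abel) hbi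
    have m4 : R Z X Y ∈ V₁ := by
      rw [heq]; exact sub_mem (neg_mem m1) m2
    exact hmem0 _ m4 m3
  -- R of two V₁ᗮ vectors kills V₁
  have hz2 : ∀ Y ∈ V₁ᗮ, ∀ Z ∈ V₁ᗮ, ∀ X ∈ V₁, R Y Z X = 0 := by
    intro Y hY Z hZ X hX
    have hbi := hb X Y Z
    have m1 : R X Y Z ∈ V₁ᗮ := hinv' _ (hg X Y) Z hZ
    have m3 : R Z X Y ∈ V₁ᗮ := hinv' _ (hg Z X) Y hY
    have m2 : R Y Z X ∈ V₁ := hinv _ (hg Y Z) X hX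
    have heq : R Y Z X = -R X Y Z - R Z X Y := by
      linear_combination (norm := abel) hbi
    have m4 : R Y Z X ∈ V₁ᗮ := by
      rw [heq]; exact sub_mem (neg_mem m1) m3
    exact hmem0 _ m2 m4
  -- simplicity: an element of g killing an invariant subspace on which g acts
  -- nontrivially must be zero
  have key : ∀ (W : Submodule ℝ V) (hW : ∀ A ∈ g, ∀ x ∈ W, A x ∈ W),
      (∃ A ∈ g, ∃ x ∈ W, A x ≠ 0) →
      ∀ A ∈ g, (∀ x ∈ W, A x = 0) → A = 0 := by
    intro W hW hne A hA hkill
    rcases hsimple.eq_bot_or_eq_top (killIdeal g W hW) with hbot | htop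
    · have : (⟨A, hA⟩ : g) ∈ killIdeal g W hW := hkill
      rw [hbot] at this
      have := (LieSubmodule.mem_bot _).mp this
      exact congrArg Subtype.val this
    · obtain ⟨B, hB, x, hx, hBx⟩ := hne
      have : (⟨B, hB⟩ : g) ∈ killIdeal g W hW := by rw [htop]; trivial
      exact absurd (this x hx) hBx
  have hV1pairs : ∀ Z ∈ V₁, ∀ X ∈ V₁, R Z X = 0 := by
    intro Z hZ X hX
    exact key V₁ᗮ hinv' h₂ _ (hg Z X) (fun y hy => hz1 Z hZ X hX y hy)
  have hV2pairs : ∀ Y ∈ V₁ᗮ, ∀ Z ∈ V₁ᗮ, R Y Z = 0 := by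
    intro Y hY Z hZ
    exact key V₁ hinv h₁ _ (hg Y Z) (fun x hx => hz2 Y hY Z hZ x hx)
  -- mixed terms vanish
  have hmix : ∀ X ∈ V₁, ∀ Y ∈ V₁ᗮ, R X Y = 0 := by
    intro X hX Y hY
    apply LinearMap.ext
    intro v
    obtain ⟨y, hy, z, hz, rfl⟩ := V₁.exists_add_mem_mem_orthogonal v
    rw [map_add]
    have t1 : R X Y y = 0 := by
      have hm : R X Y y ∈ V₁ := hinv _ (hg X Y) y hy
      have h0 : ⟪R X Y y, R X Y y⟫ = 0 := by
        rw [hps, hV1pairs y hy _ hm]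
        simp
      exact inner_self_eq_zero.mp h0
    have t2 : R X Y z = 0 := by
      have hm : R X Y z ∈ V₁ᗮ := hinv' _ (hg X Y) z hz
      have h0 : ⟪R X Y z, R X Y z⟫ = 0 := by
        rw [hps, hV2pairs z hz _ hm]
        simp
      exact inner_self_eq_zero.mp h0
    rw [t1, t2, add_zero, LinearMap.zero_apply]
  -- conclusion
  apply LinearMap.ext; intro X
  apply LinearMap.ext; intro Y
  obtain ⟨x1, hx1, x2, hx2, rfl⟩ := V₁.exists_add_mem_mem_orthogonal X
  obtain ⟨y1, hy1, y2, hy2, rfl⟩ := V₁.exists_add_mem_mem_orthogonal Y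
  simp only [map_add, LinearMap.add_apply]
  rw [hV1pairs x1 hx1 y1 hy1, hmix x1 hx1 y2 hy2,
    hanti x2 y1, hmix y1 hy1 x2 hx2, hV2pairs x2 hx2 y2 hy2]
  simp


end
end

section
/- Let V be a finite-dimensional real inner product space and g ⊆ so(V) a Lie subalgebra such that V is irreducible as a g-module. Suppose there exists a nonzero linear map η : V → g that is g-equivariant, i.e., η(AX) = [A, η(X)] for all A ∈ g and X ∈ V. Then g is a simple Lie algebra, η is a g-module isomorphism from V onto g equipped with the adjoint action, and the trilinear form (X,Y,Z) ↦ ⟨η(X)Y, Z⟩ on V is alternating (it is a three-form). -/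
set_option maxHeartbeats 1000000

open scoped RealInnerProductSpace

attribute [local instance 100] LieRing.ofAssociativeRing

noncomputable section

private theorem trace_eq_sum_inner' {V : Type*} [NormedAddCommGroup V] [InnerProductSpace ℝ V]
    [FiniteDimensional ℝ V] (f : Module.End ℝ V) :
    LinearMap.trace ℝ V f = ∑ i, ⟪(stdOrthonormalBasis ℝ V) i, f ((stdOrthonormalBasis ℝ V) i)⟫ := by
  set b := stdOrthonormalBasis ℝ V
  rw [LinearMap.trace_eq_matrix_trace ℝ b.toBasis, Matrix.trace]
  congr 1
  ext i
  rw [Matrix.diag_apply, LinearMap.toMatrix_apply]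
  simp [b.coe_toBasis_repr_apply, b.repr_apply_apply, real_inner_comm]

/-- Let `g ⊆ so(V)` act irreducibly on `V` and let `η : V → g` be a nonzero
`g`-equivariant linear map (for the adjoint action on `g`).  Then `g` is simple,
`η` is a `g`-module isomorphism of `V` onto `g`, and the trilinear form
`(X,Y,Z) ↦ ⟪η(X)Y, Z⟫` is alternating. -/
theorem simple_of_equivariant_torsion
    {V : Type*} [NormedAddCommGroup V] [InnerProductSpace ℝ V] [FiniteDimensional ℝ V]
    (g : LieSubalgebra ℝ (Module.End ℝ V))
    (hskew : ∀ A ∈ g, ∀ x y : V, ⟪A x, y⟫ = -⟪x, A y⟫)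
    (hne : (∃ v : V, v ≠ 0))
    (hirr : ∀ U : Submodule ℝ V, (∀ A ∈ g, ∀ x ∈ U, A x ∈ U) → U = ⊥ ∨ U = ⊤)
    (η : V →ₗ[ℝ] Module.End ℝ V)
    (hval : ∀ x : V, η x ∈ g)
    (hnz : η ≠ 0)
    (hequiv : ∀ A ∈ g, ∀ x : V, η (A x) = ⁅A, η x⁆) :
    LieAlgebra.IsSimple ℝ g ∧
    Function.Injective η ∧
    Set.range η = (↑g : Set (Module.End ℝ V)) ∧
    (∀ X Y Z : V, ⟪η X Y, Z⟫ = -⟪η Y X, Z⟫ ∧ ⟪η X Y, Z⟫ = -⟪η X Z, Y⟫) := by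
  classical
  -- Step 1 : injectivity
  have hker : LinearMap.ker η = ⊥ := by
    rcases hirr (LinearMap.ker η) (by
      intro A hA x hx
      rw [LinearMap.mem_ker] at hx ⊢
      rw [hequiv A hA x, hx, lie_zero]) with h | h
    · exact h
    · exfalso
      apply hnz
      ext x y
      have : η x = 0 := LinearMap.mem_ker.mp (h ▸ Submodule.mem_top)
      simp [this]
  have hinj : Function.Injective η := LinearMap.ker_eq_bot.mp hker
  -- Step 2 : antisymmetry of (X,Y) ↦ η X Y
  have anti : ∀ X Y : V, η X Y = -(η Y X) := by
    intro X Y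
    apply hinj
    rw [map_neg, hequiv (η X) (hval X) Y, hequiv (η Y) (hval Y) X, lie_skew]
  -- Step 3 : positivity of the Hilbert–Schmidt form on skew operators
  have hpos : ∀ P ∈ g, LinearMap.trace ℝ V (P * P) = 0 → P = 0 := by
    intro P hP h0
    set b := stdOrthonormalBasis ℝ V with hb
    have htr : LinearMap.trace ℝ V (P * P) = -∑ i, ‖P (b i)‖ ^ 2 := by
      rw [trace_eq_sum_inner', ← Finset.sum_neg_distrib]
      congr 1
      ext i
      calc ⟪b i, (P * P) (b i)⟫ = ⟪b i, P (P (b i))⟫ := rfl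
        _ = -⟪P (b i), P (b i)⟫ := by have := hskew P hP (b i) (P (b i)); linarith
        _ = -‖P (b i)‖ ^ 2 := by rw [real_inner_self_eq_norm_sq]
    rw [htr, neg_eq_zero] at h0
    have hz : ∀ i, P (b i) = 0 := by
      intro i
      have := (Finset.sum_eq_zero_iff_of_nonneg (fun i _ => sq_nonneg ‖P (b i)‖)).mp h0 i
        (Finset.mem_univ i)
      simpa [pow_eq_zero_iff] using this
    apply b.toBasis.ext
    intro i
    simpa using hz i
  -- Step 4 : kernel lemma for the trace pairing
  have hB0 : ∀ B ∈ g, (∀ x : V, LinearMap.trace ℝ V (B * η x) = 0) → B = 0 := by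
    intro B hB h0
    have key : ∀ x y : V, LinearMap.trace ℝ V (η (B x) * η y) = 0 := by
      intro x y
      have h1 : η (B x) = B * η x - η x * B := by
        rw [hequiv B hB x, Ring.lie_def]
      have h2 : LinearMap.trace ℝ V (η (B x) * η y)
          = LinearMap.trace ℝ V (B * (η x * η y)) - LinearMap.trace ℝ V (B * (η y * η x)) := by
        rw [h1, sub_mul, map_sub, mul_assoc]
        congr 1
        rw [mul_assoc, LinearMap.trace_mul_comm, mul_assoc]
      have h3 : η x * η y - η y * η x = η ((η x) y) := by
        rw [hequiv (η x) (hval x) y, Ring.lie_def]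
      rw [h2, ← map_sub, ← mul_sub, h3, h0]
    have hx0 : ∀ x : V, B x = 0 := by
      intro x
      have : η (B x) = 0 := hpos _ (hval _) (key x (B x))
      exact hinj (by simpa using this)
    ext x; simpa using hx0 x
  -- Step 5 : surjectivity
  have hle : LinearMap.range η ≤ g.toSubmodule := by
    rintro a ⟨x, rfl⟩; exact hval x
  let L : Module.End ℝ V →ₗ[ℝ] Module.Dual ℝ V :=
    LinearMap.mk₂ ℝ (fun B x => LinearMap.trace ℝ V (B * η x))
      (fun B C x => by simp [add_mul])
      (fun c B x => by simp [smul_mul_assoc])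
      (fun B x y => by simp [mul_add])
      (fun c B x => by simp [mul_smul_comm])
  have hLinj : Function.Injective (L.comp g.toSubmodule.subtype) := by
    rw [← LinearMap.ker_eq_bot, LinearMap.ker_eq_bot']
    intro B hB
    have hBz : (B : Module.End ℝ V) = 0 := by
      apply hB0 B B.2
      intro x
      have := LinearMap.ext_iff.mp hB x
      simpa [L, LinearMap.mk₂_apply] using this
    exact Subtype.ext hBz
  have hdim : Module.finrank ℝ g.toSubmodule ≤ Module.finrank ℝ V := by
    have := LinearMap.finrank_le_finrank_of_injective hLinj
    rwa [Subspace.dual_finrank_eq] at this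
  have hrange : LinearMap.range η = g.toSubmodule :=
    Submodule.eq_of_le_of_finrank_le hle
      (by rwa [LinearMap.finrank_range_of_inj hinj])
  have hset : Set.range ⇑η = (↑g : Set (Module.End ℝ V)) := by
    rw [← LinearMap.coe_range, hrange]; rfl
  -- the lift of η to g
  let ηg : V →ₗ[ℝ] g :=
    { toFun := fun x => ⟨η x, hval x⟩
      map_add' := fun x y => Subtype.ext (by simp)
      map_smul' := fun c x => Subtype.ext (by simp) }
  have hηg : ∀ (A : Module.End ℝ V) (hA : A ∈ g) (x : V),
      ηg (A x) = ⁅(⟨A, hA⟩ : g), ηg x⁆ := by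
    intro A hA x
    apply Subtype.ext
    rw [LieSubalgebra.coe_bracket]
    exact hequiv A hA x
  -- Step 6 : simplicity
  have hsimple : LieAlgebra.IsSimple ℝ g := by
    constructor
    · intro I
      rcases hirr (Submodule.comap ηg (LieSubmodule.toSubmodule I)) (by
        intro A hA x hx
        simp only [Submodule.mem_comap] at hx ⊢
        rw [hηg A hA x]
        exact I.lie_mem hx) with h | h
      · left
        ext a
        simp only [LieSubmodule.mem_bot]
        constructor
        · intro ha
          obtain ⟨A, hA⟩ := a
          have hAx : ∀ x : V, A x = 0 := by
            intro x
            have hm : ηg (A x) ∈ I := by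
              have h4 : ⁅ηg x, (⟨A, hA⟩ : g)⁆ ∈ I := I.lie_mem ha
              have h5 : -⁅ηg x, (⟨A, hA⟩ : g)⁆ ∈ I := neg_mem h4
              rw [hηg A hA x, ← lie_skew]
              exact h5
            have hmem : A x ∈ Submodule.comap ηg (LieSubmodule.toSubmodule I) := hm
            rw [h] at hmem
            simpa using hmem
          apply Subtype.ext
          ext x
          simpa using hAx x
        · rintro rfl; exact I.zero_mem
      · right
        set_option synthInstance.maxHeartbeats 400000 in rw [eq_top_iff]
        rintro ⟨A, hA⟩ _
        have hA' : A ∈ LinearMap.range η := by rw [hrange]; exact hA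
        obtain ⟨x, hx⟩ := hA'
        have hxU : x ∈ Submodule.comap ηg (LieSubmodule.toSubmodule I) := by
          rw [h]; trivial
        have hI : ηg x ∈ I := hxU
        have heq : ηg x = ⟨A, hA⟩ := Subtype.ext hx
        rwa [heq] at hI
    · intro habs
      apply hnz
      ext x y
      have h0 : ⁅ηg x, ηg y⁆ = 0 := trivial_lie_zero _ _ _ _
      have h1 : ⁅η x, η y⁆ = (0 : Module.End ℝ V) := by
        have h0' := congrArg Subtype.val h0
        rw [LieSubalgebra.coe_bracket] at h0'
        exact h0'
      have h2 : η ((η x) y) = 0 := by rw [hequiv (η x) (hval x) y, h1]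
      have h3 : (η x) y = 0 := hinj (by simpa using h2)
      simpa using h3
  refine ⟨hsimple, hinj, hset, ?_⟩
  intro X Y Z
  refine ⟨?_, ?_⟩
  · rw [anti X Y, inner_neg_left]
  · rw [hskew (η X) (hval X) Y Z]
    congr 1
    exact real_inner_comm _ _

end
end
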